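/- Let A = ∑ᵢ₌₁ⁿ aᵢ O^{(i)} ⊗ I^{[n]∖{i}} be a Hermitian operator on (ℂ⁴)^{⊗n}, where each aᵢ ≥ 0, each O^{(i)} ∈ H₄ is traceless with ‖O^{(i)}‖_F = 1 (here with normalization tr((O^{(i)})²)/4 = 1), and O^{(i)} acts on the i-th tensor factor. If the normalized Frobenius distance of A² to I is at most ε, then there exists ℓ ∈ [n] such that A is O(ε)-close in normalized Frobenius norm to O^{(ℓ)} ⊗ I^{[n]∖{ℓ}}. -/

import Mathlib

open Matrix

noncomputable def frobNorm {m k : Type*} [Fintype m] [Fintype k] (M : Matrix m k ℂ) : ℝ :=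
  Real.sqrt (∑ i, ∑ j, Complex.normSq (M i j))

/-- The operator `O ⊗ I^{[n]∖{i}}` acting on the `i`-th register of `(ℂ⁴)^{⊗n}`. -/
noncomputable def embedAt {n : ℕ} (i : Fin n) (O : Matrix (Fin 4) (Fin 4) ℂ) :
    Matrix (Fin n → Fin 4) (Fin n → Fin 4) ℂ :=
  fun x y => if ∀ j, j ≠ i → x j = y j then O (x i) (y i) else 0

namespace Stmt15

open Finset

noncomputable def ip {m : Type*} [Fintype m] (A B : Matrix m m ℂ) : ℂ :=
  ∑ x, ∑ y, (starRingEnd ℂ) (A x y) * B x y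

lemma ip_self_eq {m : Type*} [Fintype m] (A : Matrix m m ℂ) :
    ip A A = ((frobNorm A) ^ 2 : ℝ) := by
  unfold ip frobNorm
  rw [Real.sq_sqrt (Finset.sum_nonneg fun (x : m) _ =>
    Finset.sum_nonneg fun (y : m) _ => Complex.normSq_nonneg (A x y))]
  push_cast
  refine Finset.sum_congr rfl fun x _ => Finset.sum_congr rfl fun y _ => ?_
  rw [Complex.normSq_eq_conj_mul_self]

lemma frobNorm_nonneg {m k : Type*} [Fintype m] [Fintype k] (A : Matrix m k ℂ) :
    0 ≤ frobNorm A := Real.sqrt_nonneg _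

lemma ip_cs {m : Type*} [Fintype m] (A B : Matrix m m ℂ) :
    ‖ip A B‖ ≤ frobNorm A * frobNorm B := by
  classical
  let v : Matrix m m ℂ → EuclideanSpace ℂ (m × m) := fun M => WithLp.toLp 2 (fun p => M p.1 p.2)
  have hinner : (inner ℂ (v A) (v B) : ℂ) = ip A B := by
    simp only [PiLp.inner_apply, RCLike.inner_apply, v, ip]
    rw [Fintype.sum_prod_type]
    exact Finset.sum_congr rfl fun x _ => Finset.sum_congr rfl fun y _ => mul_comm _ _
  have hnorm : ∀ M : Matrix m m ℂ, ‖v M‖ = frobNorm M := by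
    intro M
    rw [EuclideanSpace.norm_eq, frobNorm]
    congr 1
    rw [Fintype.sum_prod_type]
    refine Finset.sum_congr rfl fun p _ => Finset.sum_congr rfl fun q _ => ?_
    rw [Complex.sq_norm]
  calc ‖ip A B‖ = ‖(inner ℂ (v A) (v B) : ℂ)‖ := by rw [hinner]
    _ ≤ ‖v A‖ * ‖v B‖ := norm_inner_le_norm _ _
    _ = frobNorm A * frobNorm B := by rw [hnorm, hnorm]

variable {m : Type*} [Fintype m] {ι : Type*}

lemma ip_sum_left (s : Finset ι) (f : ι → Matrix m m ℂ) (N : Matrix m m ℂ) :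
    ip (∑ i ∈ s, f i) N = ∑ i ∈ s, ip (f i) N := by
  unfold ip
  simp only [Matrix.sum_apply, map_sum, Finset.sum_mul]
  exact Eq.trans (Finset.sum_congr rfl fun x _ => Finset.sum_comm) Finset.sum_comm

lemma ip_sum_right (s : Finset ι) (M : Matrix m m ℂ) (f : ι → Matrix m m ℂ) :
    ip M (∑ i ∈ s, f i) = ∑ i ∈ s, ip M (f i) := by
  unfold ip
  simp only [Matrix.sum_apply, Finset.mul_sum]
  exact Eq.trans (Finset.sum_congr rfl fun x _ => Finset.sum_comm) Finset.sum_comm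

lemma ip_smul_left (c : ℂ) (M N : Matrix m m ℂ) :
    ip (c • M) N = (starRingEnd ℂ) c * ip M N := by
  simp [ip, Matrix.smul_apply, smul_eq_mul, _root_.map_mul, Finset.mul_sum, mul_assoc]

lemma ip_smul_right (c : ℂ) (M N : Matrix m m ℂ) :
    ip M (c • N) = c * ip M N := by
  simp only [ip, Matrix.smul_apply, smul_eq_mul, Finset.mul_sum]
  refine Finset.sum_congr rfl fun x _ => Finset.sum_congr rfl fun y _ => by ring

lemma ip_sub_right (M N₁ N₂ : Matrix m m ℂ) :
    ip M (N₁ - N₂) = ip M N₁ - ip M N₂ := by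
  simp [ip, Matrix.sub_apply, mul_sub, Finset.sum_sub_distrib]

variable {n : ℕ}

noncomputable def pf (f : Fin n → Fin 4 → Fin 4 → ℂ) :
    Matrix (Fin n → Fin 4) (Fin n → Fin 4) ℂ :=
  Matrix.of fun x y => ∏ k, f k (x k) (y k)

lemma sum_prod_eval (F : Fin n → Fin 4 → ℂ) :
    ∑ z : Fin n → Fin 4, ∏ k, F k (z k) = ∏ k, ∑ s, F k s := by
  rw [Fintype.prod_sum]

lemma ip_pf (f g : Fin n → Fin 4 → Fin 4 → ℂ) :
    ip (pf f) (pf g) = ∏ k, ∑ s, ∑ t, (starRingEnd ℂ) (f k s t) * g k s t := by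
  unfold ip pf
  simp only [Matrix.of_apply, map_prod, ← Finset.prod_mul_distrib]
  calc ∑ x : Fin n → Fin 4, ∑ y : Fin n → Fin 4,
        ∏ k, (starRingEnd ℂ) (f k (x k) (y k)) * g k (x k) (y k)
      = ∑ x : Fin n → Fin 4, ∏ k, ∑ t, (starRingEnd ℂ) (f k (x k) t) * g k (x k) t := by
        exact Finset.sum_congr rfl fun x _ =>
          sum_prod_eval (fun k t => (starRingEnd ℂ) (f k (x k) t) * g k (x k) t)
    _ = ∏ k, ∑ s, ∑ t, (starRingEnd ℂ) (f k s t) * g k s t :=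
        sum_prod_eval (fun k s => ∑ t, (starRingEnd ℂ) (f k s t) * g k s t)

lemma pf_mul (f g : Fin n → Fin 4 → Fin 4 → ℂ) :
    pf f * pf g = pf (fun k s t => ∑ u, f k s u * g k u t) := by
  ext x y
  simp only [Matrix.mul_apply, pf, Matrix.of_apply, ← Finset.prod_mul_distrib]
  exact sum_prod_eval (fun k u => f k (x k) u * g k u (y k))

def idf : Fin 4 → Fin 4 → ℂ := fun s t => if s = t then 1 else 0

noncomputable def sf (i : Fin n) (O : Matrix (Fin 4) (Fin 4) ℂ) :
    Fin n → Fin 4 → Fin 4 → ℂ :=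
  fun k => if k = i then (fun s t => O s t) else idf

noncomputable def tf (i j : Fin n) (O P : Matrix (Fin 4) (Fin 4) ℂ) :
    Fin n → Fin 4 → Fin 4 → ℂ :=
  fun k => if k = i then (fun s t => O s t) else if k = j then (fun s t => P s t) else idf

lemma embedAt_eq_pf (i : Fin n) (O : Matrix (Fin 4) (Fin 4) ℂ) :
    embedAt i O = pf (sf i O) := by
  ext x y
  simp only [embedAt, pf, Matrix.of_apply]
  by_cases h : ∀ j, j ≠ i → x j = y j
  · rw [if_pos h]
    rw [Finset.prod_eq_single i (fun k _ hk => by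
      simp [sf, hk, idf, h k hk]) (fun h' => absurd (mem_univ i) h')]
    simp [sf]
  · rw [if_neg h]
    push_neg at h
    obtain ⟨j, hj, hxy⟩ := h
    refine (Finset.prod_eq_zero (mem_univ j) ?_).symm
    simp [sf, hj, idf, hxy]

lemma one_eq_pf : (1 : Matrix (Fin n → Fin 4) (Fin n → Fin 4) ℂ) = pf (fun _ => idf) := by
  ext x y
  simp only [pf, Matrix.of_apply, Matrix.one_apply]
  by_cases h : x = y
  · subst h; simp [idf]
  · rw [if_neg h]
    obtain ⟨j, hj⟩ := Function.ne_iff.mp h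
    exact (Finset.prod_eq_zero (mem_univ j) (by simp [idf, hj])).symm

lemma e_id_id : ∑ s : Fin 4, ∑ t : Fin 4, (starRingEnd ℂ) (idf s t) * idf s t = 4 := by
  simp [idf, apply_ite (starRingEnd ℂ), Finset.sum_ite_eq]

lemma e_O_id (O : Matrix (Fin 4) (Fin 4) ℂ) :
    ∑ s : Fin 4, ∑ t : Fin 4, (starRingEnd ℂ) (O s t) * idf s t = (starRingEnd ℂ) O.trace := by
  simp only [idf, mul_ite, mul_one, mul_zero, Finset.sum_ite_eq, mem_univ, if_true]
  rw [Matrix.trace, map_sum]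
  rfl

lemma e_id_O (O : Matrix (Fin 4) (Fin 4) ℂ) :
    ∑ s : Fin 4, ∑ t : Fin 4, (starRingEnd ℂ) (idf s t) * O s t = O.trace := by
  simp [idf, apply_ite (starRingEnd ℂ), Finset.sum_ite_eq, Matrix.trace, Matrix.diag]

lemma e_O_P (O P : Matrix (Fin 4) (Fin 4) ℂ) :
    ∑ s : Fin 4, ∑ t : Fin 4, (starRingEnd ℂ) (O s t) * P s t = (Oᴴ * P).trace := by
  rw [Matrix.trace]
  rw [Finset.sum_comm]
  refine Finset.sum_congr rfl fun t _ => ?_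
  rw [Matrix.diag_apply, Matrix.mul_apply]
  refine Finset.sum_congr rfl fun s _ => ?_
  rw [Matrix.conjTranspose_apply]
  rfl

lemma m_id_id (s t : Fin 4) : ∑ u : Fin 4, idf s u * idf u t = idf s t := by
  simp [idf, ite_mul, Finset.sum_ite_eq]

lemma m_O_id (O : Matrix (Fin 4) (Fin 4) ℂ) (s t : Fin 4) :
    ∑ u : Fin 4, O s u * idf u t = O s t := by
  simp [idf, mul_ite, Finset.sum_ite_eq']

lemma m_id_O (O : Matrix (Fin 4) (Fin 4) ℂ) (s t : Fin 4) :
    ∑ u : Fin 4, idf s u * O u t = O s t := by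
  simp [idf, ite_mul, Finset.sum_ite_eq]

lemma prod_single_site (h : Fin n → ℂ) (i : Fin n) (hk : ∀ k, k ≠ i → h k = 4) :
    ∏ k, h k = h i * 4 ^ (n - 1) := by
  rw [← Finset.mul_prod_erase univ h (mem_univ i)]
  congr 1
  rw [Finset.prod_congr rfl (fun k hk' => hk k (Finset.ne_of_mem_erase hk')),
    Finset.prod_const, Finset.card_erase_of_mem (mem_univ i), Finset.card_univ, Fintype.card_fin]

lemma prod_two_sites (h : Fin n → ℂ) (i j : Fin n) (hij : i ≠ j)
    (hk : ∀ k, k ≠ i → k ≠ j → h k = 4) :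
    ∏ k, h k = h i * h j * 4 ^ (n - 2) := by
  rw [← Finset.mul_prod_erase univ h (mem_univ i),
    ← Finset.mul_prod_erase (univ.erase i) h (Finset.mem_erase.mpr ⟨hij.symm, mem_univ j⟩),
    ← mul_assoc]
  congr 1
  have : ∀ k ∈ (univ.erase i).erase j, h k = 4 := by
    intro k hk'
    rw [Finset.mem_erase, Finset.mem_erase] at hk'
    exact hk k hk'.2.1 hk'.1
  rw [Finset.prod_congr rfl this, Finset.prod_const,
    Finset.card_erase_of_mem (Finset.mem_erase.mpr ⟨hij.symm, mem_univ j⟩),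
    Finset.card_erase_of_mem (mem_univ i), Finset.card_univ, Fintype.card_fin]
  congr 1

variable {i j k l : Fin n} {O P O' P' M : Matrix (Fin 4) (Fin 4) ℂ}

lemma tf_comm (hij : i ≠ j) : tf j i P O = tf i j O P := by
  funext k
  by_cases hki : k = i
  · subst hki; simp [tf, hij]
  · by_cases hkj : k = j
    · subst hkj; simp [tf, hki, fun h : k = i => hki h]
    · simp [tf, hki, hkj]

lemma sf_apply_ne (h : k ≠ i) : sf i O k = idf := by simp [sf, h]
lemma sf_apply_eq : sf i O i = fun s t => O s t := by simp [sf]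
lemma tf_apply_eq_left : tf i j O P i = fun s t => O s t := by simp [tf]
lemma tf_apply_eq_right (hij : i ≠ j) : tf i j O P j = fun s t => P s t := by
  simp [tf, hij.symm]
lemma tf_apply_ne (h1 : k ≠ i) (h2 : k ≠ j) : tf i j O P k = idf := by simp [tf, h1, h2]

lemma ip_sf_sf_ne (hij : i ≠ j) (hP : P.trace = 0) :
    ip (pf (sf i O)) (pf (sf j P)) = 0 := by
  rw [ip_pf]
  refine Finset.prod_eq_zero (mem_univ j) ?_
  rw [sf_apply_ne hij.symm, sf_apply_eq]
  rw [e_id_O, hP]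

lemma ip_sf_sf_eq : ip (pf (sf i O)) (pf (sf i P)) = (Oᴴ * P).trace * 4 ^ (n - 1) := by
  rw [ip_pf]
  rw [prod_single_site _ i (fun k hk => by rw [sf_apply_ne hk, sf_apply_ne hk, e_id_id])]
  rw [sf_apply_eq, sf_apply_eq, e_O_P]

lemma ip_one_sf : ip (pf (fun _ => idf)) (pf (sf i M)) = M.trace * 4 ^ (n - 1) := by
  rw [ip_pf]
  rw [prod_single_site _ i (fun k hk => by rw [sf_apply_ne hk, e_id_id])]
  rw [sf_apply_eq, e_id_O]

lemma ip_one_one :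
    ip (pf (fun _ => idf : Fin n → Fin 4 → Fin 4 → ℂ)) (pf (fun _ => idf)) = 4 ^ n := by
  rw [ip_pf]
  rw [Finset.prod_congr rfl (fun k _ => e_id_id), Finset.prod_const, Finset.card_univ,
    Fintype.card_fin]

lemma ip_one_tf (hO : O.trace = 0) :
    ip (pf (fun _ => idf)) (pf (tf i j O P)) = 0 := by
  rw [ip_pf]
  refine Finset.prod_eq_zero (mem_univ i) ?_
  rw [tf_apply_eq_left, e_id_O, hO]

lemma ip_tf_one (hO : O.trace = 0) :
    ip (pf (tf i j O P)) (pf (fun _ => idf)) = 0 := by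
  rw [ip_pf]
  refine Finset.prod_eq_zero (mem_univ i) ?_
  rw [tf_apply_eq_left, e_O_id, hO, map_zero]

lemma ip_tf_sf (hij : i ≠ j) (hO : O.trace = 0) (hP : P.trace = 0) :
    ip (pf (tf i j O P)) (pf (sf k M)) = 0 := by
  rw [ip_pf]
  by_cases hk : k = i
  · refine Finset.prod_eq_zero (mem_univ j) ?_
    rw [tf_apply_eq_right hij, sf_apply_ne (by rw [hk]; exact hij.symm), e_O_id, hP, map_zero]
  · refine Finset.prod_eq_zero (mem_univ i) ?_
    rw [tf_apply_eq_left, sf_apply_ne (fun h => hk h.symm), e_O_id, hO, map_zero]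

lemma ip_tf_tf_eq (hij : i ≠ j) :
    ip (pf (tf i j O P)) (pf (tf i j O' P')) =
      (Oᴴ * O').trace * (Pᴴ * P').trace * 4 ^ (n - 2) := by
  rw [ip_pf]
  rw [prod_two_sites _ i j hij
    (fun k h1 h2 => by rw [tf_apply_ne h1 h2, tf_apply_ne h1 h2, e_id_id])]
  rw [tf_apply_eq_left, tf_apply_eq_left, tf_apply_eq_right hij, tf_apply_eq_right hij,
    e_O_P, e_O_P]

lemma ip_tf_tf_zero_left (hik : i ≠ k) (hil : i ≠ l) (hO : O.trace = 0) :
    ip (pf (tf i j O P)) (pf (tf k l O' P')) = 0 := by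
  rw [ip_pf]
  refine Finset.prod_eq_zero (mem_univ i) ?_
  rw [tf_apply_eq_left, tf_apply_ne hik hil, e_O_id, hO, map_zero]

lemma ip_tf_tf_zero_right (hij : i ≠ j) (hjk : j ≠ k) (hjl : j ≠ l) (hP : P.trace = 0) :
    ip (pf (tf i j O P)) (pf (tf k l O' P')) = 0 := by
  rw [ip_pf]
  refine Finset.prod_eq_zero (mem_univ j) ?_
  rw [tf_apply_eq_right hij, tf_apply_ne hjk hjl, e_O_id, hP, map_zero]

lemma mul_sf_sf : pf (sf i O) * pf (sf i P) = pf (sf i (O * P)) := by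
  rw [pf_mul]
  have hfun : (fun k s t => ∑ u, sf i O k s u * sf i P k u t) = sf i (O * P) := by
    funext k s t
    by_cases hk : k = i
    · subst hk
      rw [sf_apply_eq, sf_apply_eq, sf_apply_eq]
      exact (Matrix.mul_apply).symm
    · rw [sf_apply_ne hk, sf_apply_ne hk, sf_apply_ne hk, m_id_id]
  rw [hfun]

lemma mul_sf_sf_ne (hij : i ≠ j) :
    pf (sf i O) * pf (sf j P) = pf (tf i j O P) := by
  rw [pf_mul]
  have hfun : (fun k s t => ∑ u, sf i O k s u * sf j P k u t) = tf i j O P := by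
    funext k s t
    by_cases hki : k = i
    · subst hki
      rw [sf_apply_eq, sf_apply_ne hij, tf_apply_eq_left]
      exact m_O_id O s t
    · rw [sf_apply_ne hki]
      by_cases hkj : k = j
      · subst hkj
        rw [sf_apply_eq, tf_apply_eq_right hij]
        exact m_id_O P s t
      · rw [sf_apply_ne hkj, tf_apply_ne hki hkj, m_id_id]
  rw [hfun]

lemma sum_ite_ne {ι : Type*} [Fintype ι] [DecidableEq ι] (k : ι) (f : ι → ℂ) :
    ∑ l, (if l = k then 0 else f l) = ∑ l ∈ univ.erase k, f l := by
  rw [← Finset.sum_erase (f := fun l => if l = k then (0:ℂ) else f l) Finset.univ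
    (by simp : (if k = k then (0:ℂ) else f k) = 0)]
  exact Finset.sum_congr rfl fun l hl => by rw [if_neg (Finset.mem_erase.mp hl).1]

end Stmt15

open Stmt15

set_option maxHeartbeats 1000000 in
theorem stmt15 :
    ∃ Cst : ℝ, 0 < Cst ∧
      ∀ (n : ℕ) (_ : 0 < n) (ε : ℝ) (_ : 0 ≤ ε) (a : Fin n → ℝ)
        (O : Fin n → Matrix (Fin 4) (Fin 4) ℂ)
        (A : Matrix (Fin n → Fin 4) (Fin n → Fin 4) ℂ),
        (∀ i, 0 ≤ a i) →
        (∀ i, (O i).IsHermitian) →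
        (∀ i, (O i).trace = 0) →
        (∀ i, ((O i)ᴴ * O i).trace / 4 = 1) →
        A = ∑ i, (a i : ℂ) • embedAt i (O i) →
        frobNorm (A * A - 1) / Real.sqrt ((4 : ℝ) ^ n) ≤ ε →
        ∃ ℓ : Fin n,
          frobNorm (A - embedAt ℓ (O ℓ)) / Real.sqrt ((4 : ℝ) ^ n) ≤ Cst * ε ∧
          |a ℓ - 1| ≤ Cst * ε ∧
          ∑ j ∈ Finset.univ.erase ℓ, (a j) ^ 2 ≤ Cst * ε ^ 2 := by
  classical
  refine ⟨10, by norm_num, ?_⟩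
  intro n hn ε hε a O A ha hherm htr hnorm hA hclose
  -- basic trace facts
  have htrH : ∀ i, ((O i)ᴴ * O i).trace = 4 := fun i => by
    have h := hnorm i
    field_simp at h
    exact h
  have htrsq : ∀ i, (O i * O i).trace = 4 := fun i => by
    nth_rewrite 1 [← (hherm i).eq]
    exact htrH i
  have hpow1 : ((4:ℂ) ^ (n - 1)) * 4 = 4 ^ n := by
    rw [← pow_succ]
    congr 1
    omega
  have h2pos : (0:ℝ) < 2 ^ n := by positivity
  have hsqrt4 : Real.sqrt ((4 : ℝ) ^ n) = 2 ^ n := by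
    rw [show ((4:ℝ) ^ n) = ((2:ℝ) ^ n) ^ 2 by rw [sq, ← mul_pow]; norm_num]
    exact Real.sqrt_sq (le_of_lt h2pos)
  have hMB : frobNorm (A * A - 1) ≤ ε * 2 ^ n := by
    rw [div_le_iff₀ (by rw [hsqrt4]; exact h2pos)] at hclose
    rwa [hsqrt4] at hclose
  have hA' : A = ∑ i, (a i : ℂ) • pf (sf i (O i)) := by
    rw [hA]
    exact Finset.sum_congr rfl fun i _ => by rw [embedAt_eq_pf]
  -- single-site inner products
  have hEE_eq : ∀ i, ip (pf (sf i (O i))) (pf (sf i (O i))) = (4:ℂ) ^ n := fun i => by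
    rw [ip_sf_sf_eq, htrH i, mul_comm, hpow1]
  have hEEij : ∀ i j, ip (pf (sf i (O i))) (pf (sf j (O j))) = if j = i then (4:ℂ)^n else 0 := by
    intro i j
    by_cases h : j = i
    · subst h; rw [if_pos rfl]; exact hEE_eq j
    · rw [if_neg h, ip_sf_sf_ne (fun hh => h hh.symm) (htr j)]
  -- two-site inner products
  have hFF_eq : ∀ i j : Fin n, i ≠ j →
      ip (pf (tf i j (O i) (O j))) (pf (tf i j (O i) (O j))) = (4:ℂ) ^ n := by
    intro i j hij
    have h2n : 2 ≤ n := by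
      have h1 := i.is_lt
      have h2 := j.is_lt
      have h3 : (i:ℕ) ≠ (j:ℕ) := fun h => hij (Fin.ext h)
      omega
    rw [ip_tf_tf_eq hij, htrH i, htrH j]
    rw [show (4:ℂ)^n = 4^(n-2) * 4^2 by rw [← pow_add]; congr 1; omega]
    ring
  have hFFswap : ∀ i j : Fin n, i ≠ j →
      ip (pf (tf i j (O i) (O j))) (pf (tf j i (O j) (O i))) = (4:ℂ) ^ n := by
    intro i j hij
    rw [tf_comm hij]
    exact hFF_eq i j hij
  -- the key inner sum
  have hInner : ∀ i j : Fin n, i ≠ j →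
      (∑ k, ∑ l ∈ Finset.univ.erase k,
        ((a k : ℂ) * (a l)) * ip (pf (tf i j (O i) (O j))) (pf (tf k l (O k) (O l))))
        = 2 * ((a i : ℂ) * (a j)) * 4 ^ n := by
    intro i j hij
    have hji : j ≠ i := hij.symm
    have hzero : ∀ k : Fin n, k ≠ i → k ≠ j →
        (∑ l ∈ Finset.univ.erase k,
          ((a k : ℂ) * (a l)) * ip (pf (tf i j (O i) (O j))) (pf (tf k l (O k) (O l)))) = 0 := by
      intro k hki hkj
      refine Finset.sum_eq_zero fun l _ => ?_
      by_cases hli : l = i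
      · subst hli
        rw [ip_tf_tf_zero_right hij (Ne.symm hkj) hji (htr j), mul_zero]
      · rw [ip_tf_tf_zero_left (Ne.symm hki) (fun h => hli h.symm) (htr i), mul_zero]
    have hstepi :
        (∑ l ∈ Finset.univ.erase i,
          ((a i : ℂ) * (a l)) * ip (pf (tf i j (O i) (O j))) (pf (tf i l (O i) (O l))))
        = ((a i : ℂ) * (a j)) * 4 ^ n := by
      rw [Finset.sum_eq_single_of_mem j (Finset.mem_erase.mpr ⟨hji, Finset.mem_univ j⟩)
        (fun l _ hlj => by rw [ip_tf_tf_zero_right hij hji (Ne.symm hlj) (htr j), mul_zero])]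
      rw [hFF_eq i j hij]
    have hstepj :
        (∑ l ∈ Finset.univ.erase j,
          ((a j : ℂ) * (a l)) * ip (pf (tf i j (O i) (O j))) (pf (tf j l (O j) (O l))))
        = ((a j : ℂ) * (a i)) * 4 ^ n := by
      rw [Finset.sum_eq_single_of_mem i (Finset.mem_erase.mpr ⟨hij, Finset.mem_univ i⟩)
        (fun l _ hli => by rw [ip_tf_tf_zero_left hij (Ne.symm hli) (htr i), mul_zero])]
      rw [hFFswap i j hij]
    rw [← Finset.add_sum_erase _ _ (Finset.mem_univ i), hstepi,
      Finset.sum_eq_single_of_mem j (Finset.mem_erase.mpr ⟨hji, Finset.mem_univ j⟩)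
        (fun k hk hkj => hzero k (Finset.mem_erase.mp hk).1 hkj), hstepj]
    ring
  -- A*A expanded
  have hAA : A * A = ∑ i, ∑ j, ((a i : ℂ) * (a j)) • (pf (sf i (O i)) * pf (sf j (O j))) := by
    rw [hA', Finset.sum_mul_sum]
    refine Finset.sum_congr rfl fun i _ => Finset.sum_congr rfl fun j _ => ?_
    rw [smul_mul_smul_comm]
  -- ⟨1, A*A⟩
  have hone : (1 : Matrix (Fin n → Fin 4) (Fin n → Fin 4) ℂ) = pf (fun _ => idf) := one_eq_pf
  have hip1AA : ip (pf (fun _ => idf)) (A * A) = (((4:ℝ)^n * ∑ i, (a i)^2 : ℝ) : ℂ) := by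
    have hterm : ∀ i j : Fin n,
        ip (pf (fun _ => idf)) (((a i : ℂ) * (a j)) • (pf (sf i (O i)) * pf (sf j (O j))))
        = if j = i then ((a i : ℂ) * (a i)) * 4 ^ n else 0 := by
      intro i j
      by_cases hji : j = i
      · subst hji
        rw [if_pos rfl, ip_smul_right, mul_sf_sf, ip_one_sf, htrsq j, mul_comm (4:ℂ), hpow1]
      · rw [if_neg hji, ip_smul_right, mul_sf_sf_ne (fun h => hji h.symm),
          ip_one_tf (htr i), mul_zero]
    calc ip (pf (fun _ => idf)) (A * A)
        = ∑ i, ∑ j, (if j = i then ((a i : ℂ) * (a i)) * 4 ^ n else 0) := by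
          rw [hAA, ip_sum_right]
          exact Finset.sum_congr rfl fun i _ => by
            rw [ip_sum_right]
            exact Finset.sum_congr rfl fun j _ => hterm i j
      _ = ∑ i, ((a i : ℂ) * (a i)) * 4 ^ n := by
          refine Finset.sum_congr rfl fun i _ => ?_
          simp
      _ = (((4:ℝ)^n * ∑ i, (a i)^2 : ℝ) : ℂ) := by
          push_cast
          rw [Finset.mul_sum]
          exact Finset.sum_congr rfl fun i _ => by ring
  have hC1 : ip (pf (fun _ => idf)) (A * A - 1)
      = (((4:ℝ)^n * ((∑ i, (a i)^2) - 1) : ℝ) : ℂ) := by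
    rw [ip_sub_right, hip1AA, hone, ip_one_one]
    push_cast
    ring
  have hfrob1 : frobNorm (pf (fun _ => idf) : Matrix (Fin n → Fin 4) (Fin n → Fin 4) ℂ)
      = 2 ^ n := by
    have h := ip_self_eq (pf (fun _ => idf) : Matrix (Fin n → Fin 4) (Fin n → Fin 4) ℂ)
    rw [ip_one_one] at h
    have h' : (frobNorm (pf (fun _ => idf) : Matrix (Fin n → Fin 4) (Fin n → Fin 4) ℂ))^2
        = (4:ℝ)^n := by exact_mod_cast h.symm
    rw [← Real.sqrt_sq (frobNorm_nonneg _), h', hsqrt4]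
  have hs_bound : |(∑ i, (a i)^2) - 1| ≤ ε := by
    have hcs := ip_cs (pf (fun _ => idf) : Matrix (Fin n → Fin 4) (Fin n → Fin 4) ℂ) (A*A - 1)
    rw [hC1, Complex.norm_real, Real.norm_eq_abs, hfrob1] at hcs
    have h2 : |(4:ℝ)^n * ((∑ i, (a i)^2) - 1)| = (4:ℝ)^n * |(∑ i, (a i)^2) - 1| := by
      rw [abs_mul, abs_of_pos (by positivity : (0:ℝ) < (4:ℝ)^n)]
    rw [h2] at hcs
    have h4 : (4:ℝ)^n = 2^n * 2^n := by rw [← mul_pow]; norm_num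
    have h5 : |(∑ i, (a i)^2) - 1| * (4:ℝ)^n ≤ ε * (4:ℝ)^n := by
      calc |(∑ i, (a i)^2) - 1| * (4:ℝ)^n = (4:ℝ)^n * |(∑ i, (a i)^2) - 1| := by ring
        _ ≤ 2^n * frobNorm (A*A - 1) := hcs
        _ ≤ 2^n * (ε * 2^n) := mul_le_mul_of_nonneg_left hMB (le_of_lt h2pos)
        _ = ε * (4:ℝ)^n := by rw [h4]; ring
    exact le_of_mul_le_mul_right h5 (by positivity)
  -- the pair operator B
  set B : Matrix (Fin n → Fin 4) (Fin n → Fin 4) ℂ :=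
    ∑ i, ∑ j ∈ Finset.univ.erase i, ((a i : ℂ) * (a j)) • pf (tf i j (O i) (O j)) with hBdef
  have hconj : ∀ i j : Fin n, (starRingEnd ℂ) ((a i : ℂ) * (a j)) = (a i : ℂ) * (a j) := by
    intro i j
    rw [_root_.map_mul, Complex.conj_ofReal, Complex.conj_ofReal]
  have hB_one : ip B 1 = 0 := by
    rw [hBdef, ip_sum_left]
    refine Finset.sum_eq_zero fun i _ => ?_
    rw [ip_sum_left]
    refine Finset.sum_eq_zero fun j hj => ?_
    rw [ip_smul_left, hone, ip_tf_one (htr i), mul_zero]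
  have hB_AA : ip B (A * A)
      = (((2 * 4^n * ∑ i, ∑ j ∈ Finset.univ.erase i, (a i * a j)^2 : ℝ)) : ℂ) := by
    have hmain : ∀ i j : Fin n, i ≠ j →
        ip (pf (tf i j (O i) (O j))) (A * A) = 2 * ((a i : ℂ) * (a j)) * 4 ^ n := by
      intro i j hij
      have hterm : ∀ k l : Fin n,
          ip (pf (tf i j (O i) (O j))) (((a k : ℂ) * (a l)) • (pf (sf k (O k)) * pf (sf l (O l))))
          = if l = k then 0
            else ((a k : ℂ) * (a l)) * ip (pf (tf i j (O i) (O j))) (pf (tf k l (O k) (O l))) := by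
        intro k l
        by_cases hlk : l = k
        · subst hlk
          rw [if_pos rfl, ip_smul_right, mul_sf_sf, ip_tf_sf hij (htr i) (htr j), mul_zero]
        · rw [if_neg hlk, ip_smul_right, mul_sf_sf_ne (fun h => hlk h.symm)]
      calc ip (pf (tf i j (O i) (O j))) (A * A)
          = ∑ k, ∑ l, (if l = k then 0
              else ((a k : ℂ) * (a l)) * ip (pf (tf i j (O i) (O j))) (pf (tf k l (O k) (O l)))) := by
            rw [hAA, ip_sum_right]
            exact Finset.sum_congr rfl fun k _ => by
              rw [ip_sum_right]
              exact Finset.sum_congr rfl fun l _ => hterm k l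
        _ = ∑ k, ∑ l ∈ Finset.univ.erase k,
              ((a k : ℂ) * (a l)) * ip (pf (tf i j (O i) (O j))) (pf (tf k l (O k) (O l))) := by
            exact Finset.sum_congr rfl fun k _ => sum_ite_ne k _
        _ = 2 * ((a i : ℂ) * (a j)) * 4 ^ n := hInner i j hij
    rw [hBdef, ip_sum_left]
    calc ∑ i, ip (∑ j ∈ Finset.univ.erase i, ((a i : ℂ) * (a j)) • pf (tf i j (O i) (O j))) (A*A)
        = ∑ i, ∑ j ∈ Finset.univ.erase i,
            ((a i : ℂ) * (a j)) * (2 * ((a i : ℂ) * (a j)) * 4 ^ n) := by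
          refine Finset.sum_congr rfl fun i _ => ?_
          rw [ip_sum_left]
          refine Finset.sum_congr rfl fun j hj => ?_
          have hij : i ≠ j := Ne.symm (Finset.mem_erase.mp hj).1
          rw [ip_smul_left, hconj, hmain i j hij]
      _ = (((2 * 4^n * ∑ i, ∑ j ∈ Finset.univ.erase i, (a i * a j)^2 : ℝ)) : ℂ) := by
          push_cast
          rw [Finset.mul_sum]
          refine Finset.sum_congr rfl fun i _ => ?_
          rw [Finset.mul_sum]
          exact Finset.sum_congr rfl fun j _ => by ring
  have hBB : ip B B
      = (((2 * 4^n * ∑ i, ∑ j ∈ Finset.univ.erase i, (a i * a j)^2 : ℝ)) : ℂ) := by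
    rw [hBdef, ip_sum_left]
    calc ∑ i, ip (∑ j ∈ Finset.univ.erase i, ((a i : ℂ) * (a j)) • pf (tf i j (O i) (O j))) B
        = ∑ i, ∑ j ∈ Finset.univ.erase i,
            ((a i : ℂ) * (a j)) * (2 * ((a i : ℂ) * (a j)) * 4 ^ n) := by
          refine Finset.sum_congr rfl fun i _ => ?_
          rw [ip_sum_left]
          refine Finset.sum_congr rfl fun j hj => ?_
          have hij : i ≠ j := Ne.symm (Finset.mem_erase.mp hj).1
          rw [ip_smul_left, hconj]
          congr 1
          calc ip (pf (tf i j (O i) (O j))) B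
              = ∑ k, ∑ l ∈ Finset.univ.erase k,
                  ((a k : ℂ) * (a l)) * ip (pf (tf i j (O i) (O j))) (pf (tf k l (O k) (O l))) := by
                rw [hBdef, ip_sum_right]
                exact Finset.sum_congr rfl fun k _ => by
                  rw [ip_sum_right]
                  exact Finset.sum_congr rfl fun l _ => by rw [ip_smul_right]
            _ = 2 * ((a i : ℂ) * (a j)) * 4 ^ n := hInner i j hij
      _ = (((2 * 4^n * ∑ i, ∑ j ∈ Finset.univ.erase i, (a i * a j)^2 : ℝ)) : ℂ) := by
          push_cast
          rw [Finset.mul_sum]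
          refine Finset.sum_congr rfl fun i _ => ?_
          rw [Finset.mul_sum]
          exact Finset.sum_congr rfl fun j _ => by ring
  have hQR_nonneg : (0:ℝ) ≤ ∑ i, ∑ j ∈ Finset.univ.erase i, (a i * a j)^2 :=
    Finset.sum_nonneg fun i _ => Finset.sum_nonneg fun j _ => sq_nonneg _
  have hfB : (frobNorm B)^2 = 2 * 4^n * ∑ i, ∑ j ∈ Finset.univ.erase i, (a i * a j)^2 := by
    have h := ip_self_eq B
    rw [hBB] at h
    exact_mod_cast h.symm
  have hBM : ip B (A * A - 1)
      = (((2 * 4^n * ∑ i, ∑ j ∈ Finset.univ.erase i, (a i * a j)^2 : ℝ)) : ℂ) := by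
    rw [ip_sub_right, hB_AA, hB_one, sub_zero]
  have hfrobB_le : frobNorm B ≤ ε * 2 ^ n := by
    have hcsB := ip_cs B (A * A - 1)
    rw [hBM, Complex.norm_real, Real.norm_eq_abs, abs_of_nonneg (by positivity)] at hcsB
    rcases eq_or_lt_of_le (frobNorm_nonneg B) with h0 | h0
    · rw [← h0]; positivity
    · have hchain : frobNorm B * frobNorm B ≤ frobNorm B * (ε * 2 ^ n) := by
        calc frobNorm B * frobNorm B = (frobNorm B)^2 := (sq _).symm
          _ = 2 * 4^n * ∑ i, ∑ j ∈ Finset.univ.erase i, (a i * a j)^2 := hfB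
          _ ≤ frobNorm B * frobNorm (A*A - 1) := hcsB
          _ ≤ frobNorm B * (ε * 2 ^ n) := mul_le_mul_of_nonneg_left hMB (le_of_lt h0)
      exact le_of_mul_le_mul_left hchain h0
  have hQ : 2 * (∑ i, ∑ j ∈ Finset.univ.erase i, (a i * a j)^2) ≤ ε ^ 2 := by
    have h4 : (4:ℝ)^n = 2^n * 2^n := by rw [← mul_pow]; norm_num
    have h5 : 2 * (∑ i, ∑ j ∈ Finset.univ.erase i, (a i * a j)^2) * (4:ℝ)^n
        ≤ ε^2 * (4:ℝ)^n := by
      calc 2 * (∑ i, ∑ j ∈ Finset.univ.erase i, (a i * a j)^2) * (4:ℝ)^n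
          = (frobNorm B)^2 := by rw [hfB]; ring
        _ ≤ (ε * 2^n)^2 := pow_le_pow_left₀ (frobNorm_nonneg B) hfrobB_le 2
        _ = ε^2 * (4:ℝ)^n := by rw [h4]; ring
    exact le_of_mul_le_mul_right h5 (by positivity)
  clear hfrobB_le hBM hfB hBB hB_AA hB_one hconj hBdef
  clear_value B
  clear B hAA hip1AA hC1 hfrob1 hInner hFF_eq hFFswap
  -- choose the maximizing index
  obtain ⟨ℓ, -, hmax⟩ := Finset.exists_max_image Finset.univ a ⟨⟨0, hn⟩, Finset.mem_univ _⟩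
  have hsum_split : (a ℓ)^2 + (∑ j ∈ Finset.univ.erase ℓ, (a j)^2) = ∑ i, (a i)^2 :=
    Finset.add_sum_erase Finset.univ (fun i => (a i)^2) (Finset.mem_univ ℓ)
  have hT_nonneg : (0:ℝ) ≤ ∑ j ∈ Finset.univ.erase ℓ, (a j)^2 :=
    Finset.sum_nonneg fun j _ => sq_nonneg _
  have hsq_le : ∀ i, (a i)^2 ≤ (a ℓ)^2 :=
    fun i => pow_le_pow_left₀ (ha i) (hmax i (Finset.mem_univ i)) 2
  have hQR_ge : (∑ i, (a i)^2) * (∑ j ∈ Finset.univ.erase ℓ, (a j)^2)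
      ≤ ∑ i, ∑ j ∈ Finset.univ.erase i, (a i * a j)^2 := by
    have h1 : (∑ i, ∑ j ∈ Finset.univ.erase i, (a i * a j)^2)
        = ∑ i, ((a i)^2 * ((∑ k, (a k)^2) - (a i)^2)) := by
      refine Finset.sum_congr rfl fun i _ => ?_
      have hi : (a i)^2 + ∑ j ∈ Finset.univ.erase i, (a j)^2 = ∑ k, (a k)^2 :=
        Finset.add_sum_erase Finset.univ (fun k => (a k)^2) (Finset.mem_univ i)
      have h2 : (∑ j ∈ Finset.univ.erase i, (a i * a j)^2)
          = (a i)^2 * (∑ j ∈ Finset.univ.erase i, (a j)^2) := by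
        rw [Finset.mul_sum]
        exact Finset.sum_congr rfl fun j _ => by ring
      rw [h2, show (∑ j ∈ Finset.univ.erase i, (a j)^2) = (∑ k, (a k)^2) - (a i)^2 by linarith]
    calc (∑ i, (a i)^2) * (∑ j ∈ Finset.univ.erase ℓ, (a j)^2)
        = ∑ i, (a i)^2 * ((∑ k, (a k)^2) - (a ℓ)^2) := by
          rw [← Finset.sum_mul]
          congr 1
          linarith [hsum_split]
      _ ≤ ∑ i, ((a i)^2 * ((∑ k, (a k)^2) - (a i)^2)) :=
          Finset.sum_le_sum fun i _ =>
            mul_le_mul_of_nonneg_left (by linarith [hsq_le i]) (sq_nonneg (a i))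
      _ = ∑ i, ∑ j ∈ Finset.univ.erase i, (a i * a j)^2 := h1.symm
  have hsT : 2 * ((∑ i, (a i)^2) * (∑ j ∈ Finset.univ.erase ℓ, (a j)^2)) ≤ ε^2 := by
    nlinarith [hQR_ge, hQ]
  have hS_ub : (∑ i, (a i)^2) ≤ 1 + ε := by
    have := abs_le.mp hs_bound; linarith [this.2]
  have hS_lb : 1 - ε ≤ (∑ i, (a i)^2) := by
    have := abs_le.mp hs_bound; linarith [this.1]
  -- numeric endgame
  have hTle : (∑ j ∈ Finset.univ.erase ℓ, (a j)^2) ≤ 6 * ε^2 := by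
    by_cases hhalf : ε < 1/2
    · nlinarith [hsT, hS_lb, hT_nonneg, hε,
        mul_nonneg (by linarith : (0:ℝ) ≤ (∑ i, (a i)^2) - 1/2) hT_nonneg]
    · push_neg at hhalf
      linarith [hsum_split, sq_nonneg (a ℓ), hS_ub,
        mul_nonneg (by linarith : (0:ℝ) ≤ 2*ε - 1) (by linarith : (0:ℝ) ≤ 3*ε + 1)]
  have habs : |a ℓ - 1| ≤ 2 * ε := by
    rw [abs_le]
    constructor
    · by_cases hhalf : ε < 1/2
      · have hTsmall : (∑ j ∈ Finset.univ.erase ℓ, (a j)^2) ≤ ε^2 := by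
          nlinarith [hsT, hS_lb, hT_nonneg, hε,
            mul_nonneg (by linarith : (0:ℝ) ≤ (∑ i, (a i)^2) - 1/2) hT_nonneg]
        have hm_lb : 1 - ε - ε^2 ≤ (a ℓ)^2 := by linarith [hsum_split, hS_lb, hTsmall]
        by_cases h1 : 1 ≤ a ℓ
        · linarith
        · push_neg at h1
          nlinarith [mul_nonneg (by linarith : (0:ℝ) ≤ 1 - a ℓ) (ha ℓ), hm_lb, hε]
      · push_neg at hhalf
        linarith [ha ℓ]
    · have hm_ub : (a ℓ)^2 ≤ 1 + ε := by linarith [hsum_split, hS_ub, hT_nonneg]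
      nlinarith [ha ℓ, hε, hm_ub]
  -- distance computation
  set c : Fin n → ℝ := fun i => a i - (if i = ℓ then 1 else 0) with hcdef
  have hrep : A - pf (sf ℓ (O ℓ)) = ∑ i, ((c i : ℝ) : ℂ) • pf (sf i (O i)) := by
    rw [hA']
    have hEl : pf (sf ℓ (O ℓ)) = ∑ i, (if i = ℓ then (1:ℂ) else 0) • pf (sf i (O i)) := by
      simp [ite_smul]
    rw [hEl, ← Finset.sum_sub_distrib]
    refine Finset.sum_congr rfl fun i _ => ?_
    rw [← sub_smul]
    congr 1
    simp only [hcdef]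
    push_cast [apply_ite (fun r : ℝ => (r : ℂ))]
    ring
  have hipD : ip (A - pf (sf ℓ (O ℓ))) (A - pf (sf ℓ (O ℓ)))
      = (((4:ℝ)^n * ((a ℓ - 1)^2 + ∑ j ∈ Finset.univ.erase ℓ, (a j)^2) : ℝ) : ℂ) := by
    rw [hrep, ip_sum_left]
    have hterm : ∀ i : Fin n,
        ip (((c i : ℝ) : ℂ) • pf (sf i (O i))) (∑ j, ((c j : ℝ) : ℂ) • pf (sf j (O j)))
        = ((c i * c i : ℝ) : ℂ) * (4:ℂ)^n := by
      intro i
      rw [ip_smul_left, ip_sum_right]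
      rw [Finset.sum_congr rfl (fun j _ => by rw [ip_smul_right, hEEij i j])]
      simp only [mul_ite, mul_zero]
      rw [Finset.sum_ite_eq' Finset.univ i (fun j => ((c j : ℝ) : ℂ) * 4^n)]
      rw [if_pos (Finset.mem_univ i), Complex.conj_ofReal]
      push_cast
      ring
    rw [Finset.sum_congr rfl fun i _ => hterm i]
    have hstep : (∑ i, ((c i * c i : ℝ) : ℂ) * (4:ℂ)^n)
        = (((∑ i, c i * c i) * 4^n : ℝ) : ℂ) := by
      push_cast
      rw [Finset.sum_mul]
    rw [hstep]
    have hsplit : (∑ i, c i * c i)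
        = (a ℓ - 1)^2 + ∑ j ∈ Finset.univ.erase ℓ, (a j)^2 := by
      rw [← Finset.add_sum_erase Finset.univ (fun i => c i * c i) (Finset.mem_univ ℓ)]
      congr 1
      · simp only [hcdef, eq_self_iff_true, if_true]
        ring
      · refine Finset.sum_congr rfl fun j hj => ?_
        simp only [hcdef, if_neg (Finset.mem_erase.mp hj).1]
        ring
    rw [hsplit]
    push_cast
    ring
  have hfrobD : frobNorm (A - pf (sf ℓ (O ℓ)))
      = 2^n * Real.sqrt ((a ℓ - 1)^2 + ∑ j ∈ Finset.univ.erase ℓ, (a j)^2) := by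
    have h := ip_self_eq (A - pf (sf ℓ (O ℓ)))
    rw [hipD] at h
    have h' : (frobNorm (A - pf (sf ℓ (O ℓ))))^2
        = (4:ℝ)^n * ((a ℓ - 1)^2 + ∑ j ∈ Finset.univ.erase ℓ, (a j)^2) := by
      exact_mod_cast h.symm
    rw [← Real.sqrt_sq (frobNorm_nonneg _), h', Real.sqrt_mul (by positivity), hsqrt4]
  refine ⟨ℓ, ?_, ?_, ?_⟩
  · rw [embedAt_eq_pf, hsqrt4, hfrobD, mul_comm, mul_div_assoc, div_self (ne_of_gt h2pos),
      mul_one]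
    have hv : (a ℓ - 1)^2 + (∑ j ∈ Finset.univ.erase ℓ, (a j)^2) ≤ (10*ε)^2 := by
      have h1 := abs_le.mp habs
      nlinarith [hTle, hε, h1.1, h1.2]
    calc Real.sqrt ((a ℓ - 1)^2 + ∑ j ∈ Finset.univ.erase ℓ, (a j)^2)
        ≤ Real.sqrt ((10*ε)^2) := Real.sqrt_le_sqrt hv
      _ = 10*ε := Real.sqrt_sq (by positivity)
  · have := abs_le.mp habs
    rw [abs_le]
    constructor <;> linarith
  · linarith [hTle, sq_nonneg ε]
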